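/- Any set of mutually orthogonal product vectors {α_i ⊗ β_i} in ℂ² ⊗ ℂⁿ (n ≥ 2) is completable to a full orthogonal product basis of ℂ² ⊗ ℂⁿ; in particular there is no UPB in ℂ² ⊗ ℂⁿ. -/

import Mathlib

open Module Submodule Finset

noncomputable section

variable {E : Type*} [NormedAddCommGroup E] [InnerProductSpace ℂ E]

lemma mem_orth_span {s : Set E} {z : E} (h : ∀ v ∈ s, (inner ℂ v z : ℂ) = 0) :
    z ∈ (span ℂ s)ᗮ := by
  rw [Submodule.mem_orthogonal]
  intro u hu
  induction hu using Submodule.span_induction with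
  | mem v hv => exact h v hv
  | zero => simp
  | add a b _ _ ha hb => rw [inner_add_left, ha, hb, add_zero]
  | smul c a _ ha => rw [inner_smul_left, ha, mul_zero]

lemma finrank_le_inf_orth_add [FiniteDimensional ℂ E] (V Z : Submodule ℂ E) :
    finrank ℂ V ≤ finrank ℂ ↥(V ⊓ Zᗮ) + finrank ℂ Z := by
  have h1 := Submodule.finrank_sup_add_finrank_inf_eq V Zᗮ
  have h2 : finrank ℂ ↥(V ⊔ Zᗮ) ≤ finrank ℂ E := Submodule.finrank_le _
  have h3 := Z.finrank_add_finrank_orthogonal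
  omega

lemma exists_ne_zero_inf_orth [FiniteDimensional ℂ E] {V Z : Submodule ℂ E}
    (h : finrank ℂ Z < finrank ℂ V) :
    ∃ y : E, y ≠ 0 ∧ y ∈ V ∧ y ∈ Zᗮ := by
  have h1 := finrank_le_inf_orth_add V Z
  have h2 : V ⊓ Zᗮ ≠ ⊥ := by
    intro hb
    rw [hb, finrank_bot] at h1
    omega
  obtain ⟨y, hy, hy0⟩ := Submodule.ne_bot_iff _ |>.mp h2
  exact ⟨y, hy0, hy.1, hy.2⟩

lemma inf_orth_finrank_ge [FiniteDimensional ℂ E] {U V : Submodule ℂ E} (h : U ≤ V) :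
    finrank ℂ ↥(V ⊓ Uᗮ) + finrank ℂ U ≤ finrank ℂ V := by
  have h1 := Submodule.finrank_sup_add_finrank_inf_eq U (V ⊓ Uᗮ)
  have h2 : U ⊓ (V ⊓ Uᗮ) = ⊥ := by
    rw [eq_bot_iff]
    intro x hx
    have : x ∈ U ⊓ Uᗮ := ⟨hx.1, hx.2.2⟩
    rwa [Submodule.inf_orthogonal_eq_bot] at this
  have h3 : U ⊔ (V ⊓ Uᗮ) ≤ V := sup_le h inf_le_left
  have h4 : finrank ℂ ↥(U ⊔ (V ⊓ Uᗮ)) ≤ finrank ℂ V := Submodule.finrank_mono h3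
  rw [h2, finrank_bot] at h1
  omega

lemma finrank_sup_le [FiniteDimensional ℂ E] (A B : Submodule ℂ E) :
    finrank ℂ ↥(A ⊔ B) ≤ finrank ℂ A + finrank ℂ B := by
  have h1 := Submodule.finrank_sup_add_finrank_inf_eq A B
  omega

lemma exists_perp (u : EuclideanSpace ℂ (Fin 2)) :
    ∃ x : EuclideanSpace ℂ (Fin 2), x ≠ 0 ∧ (inner ℂ x u : ℂ) = 0 := by
  have hr : finrank ℂ (ℂ ∙ u) ≤ 1 := finrank_span_le_card {u} |>.trans (by simp)
  have h3 := (ℂ ∙ u).finrank_add_finrank_orthogonal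
  rw [finrank_euclideanSpace_fin] at h3
  have : (ℂ ∙ u)ᗮ ≠ ⊥ := by
    intro hb
    rw [hb, finrank_bot] at h3
    omega
  obtain ⟨x, hx, hx0⟩ := Submodule.ne_bot_iff _ |>.mp this
  exact ⟨x, hx0, Submodule.mem_orthogonal_singleton_iff_inner_left.mp hx⟩

lemma two_dim_dep {u v w : EuclideanSpace ℂ (Fin 2)} (hu : u ≠ 0) (hv : v ≠ 0)
    (huv : (inner ℂ u v : ℂ) = 0) (huw : (inner ℂ u w : ℂ) = 0) : ∃ c : ℂ, w = c • v := by
  have h3 := (ℂ ∙ u).finrank_add_finrank_orthogonal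
  rw [finrank_euclideanSpace_fin, finrank_span_singleton hu] at h3
  have hle : (ℂ ∙ v) ≤ (ℂ ∙ u)ᗮ := by
    rw [Submodule.span_singleton_le_iff_mem]
    exact Submodule.mem_orthogonal_singleton_iff_inner_right.mpr huv
  have heq : (ℂ ∙ v) = (ℂ ∙ u)ᗮ := by
    apply Submodule.eq_of_le_of_finrank_le hle
    rw [finrank_span_singleton hv]; omega
  have hw : w ∈ (ℂ ∙ v) := heq ▸ Submodule.mem_orthogonal_singleton_iff_inner_right.mpr huw
  obtain ⟨c, hc⟩ := Submodule.mem_span_singleton.mp hw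
  exact ⟨c, hc.symm⟩

set_option maxHeartbeats 1000000 in
lemma ext_lemma (nB : ℕ) :
    ∀ k : ℕ, ∀ (α : Fin k → EuclideanSpace ℂ (Fin 2))
      (β : Fin k → EuclideanSpace ℂ (Fin nB))
      (V : Submodule ℂ (EuclideanSpace ℂ (Fin nB))),
      (∀ j, ‖α j‖ = 1) → (∀ j, ‖β j‖ = 1) → (∀ j, β j ∈ V) →
      (∀ j l, j ≠ l → (inner ℂ (α j) (α l) : ℂ) = 0 ∨ (inner ℂ (β j) (β l) : ℂ) = 0) →
      k < 2 * finrank ℂ V →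
      ∃ x y, x ≠ 0 ∧ y ≠ 0 ∧ y ∈ V ∧
        ∀ j, (inner ℂ x (α j) : ℂ) = 0 ∨ (inner ℂ y (β j) : ℂ) = 0 := by
  intro k
  induction k using Nat.strong_induction_on with
  | _ k IH =>
  intro α β V hα hβ hβV horth hk
  classical
  have hα0 : ∀ j, α j ≠ 0 := fun j h => by simpa [h] using hα j
  have hβ0 : ∀ j, β j ≠ 0 := fun j h => by simpa [h] using hβ j
  rcases Nat.eq_zero_or_pos k with hk0 | hkpos
  · -- k = 0
    subst hk0
    have hV : V ≠ ⊥ := by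
      intro hb
      rw [hb, finrank_bot] at hk
      omega
    obtain ⟨y, hyV, hy0⟩ := Submodule.ne_bot_iff _ |>.mp hV
    refine ⟨EuclideanSpace.single 0 1, y, ?_, hy0, hyV, fun j => j.elim0⟩
    intro h
    have h0 := congrArg (fun v => v 0) h
    simp [EuclideanSpace.single_apply] at h0
  -- k ≥ 1
  -- parallel inner products are nonzero
  have hparinner : ∀ (j l l' : Fin k) (c c' : ℂ), α l = c • α j → α l' = c' • α j →
      (inner ℂ (α l) (α l') : ℂ) ≠ 0 := by
    intro j l l' c c' hc hc'
    have hc0 : c ≠ 0 := fun h => hα0 l (by rw [hc, h, zero_smul])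
    have hc'0 : c' ≠ 0 := fun h => hα0 l' (by rw [hc', h, zero_smul])
    rw [hc, hc', inner_smul_left, inner_smul_right]
    have hnn : (inner ℂ (α j) (α j) : ℂ) ≠ 0 := by
      rw [inner_self_ne_zero]; exact hα0 j
    exact mul_ne_zero (by simpa using hc0) (mul_ne_zero hc'0 hnn)
  -- choose class of maximal size
  set P : Fin k → Finset (Fin k) :=
    fun j => univ.filter fun l => ∃ c : ℂ, α l = c • α j with hP
  obtain ⟨j0, -, hmax⟩ := Finset.exists_max_image univ (fun j => (P j).card)
    ⟨⟨0, hkpos⟩, mem_univ _⟩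
  set C : Finset (Fin k) := P j0 with hC
  set C' : Finset (Fin k) := univ.filter (fun l => (inner ℂ (α j0) (α l) : ℂ) = 0) with hC'
  set R : Finset (Fin k) := univ \ (C ∪ C') with hR
  have hmemC : ∀ l, l ∈ C ↔ ∃ c : ℂ, α l = c • α j0 := by
    intro l; simp [hC, hP]
  have hmemC' : ∀ l, l ∈ C' ↔ (inner ℂ (α j0) (α l) : ℂ) = 0 := by
    intro l; simp [hC']
  have hj0C : j0 ∈ C := (hmemC j0).mpr ⟨1, (one_smul ℂ _).symm⟩
  have hdisj : Disjoint C C' := by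
    rw [Finset.disjoint_left]
    intro l hlC hlC'
    obtain ⟨c, hc⟩ := (hmemC l).mp hlC
    have := (hmemC' l).mp hlC'
    rw [hc, inner_smul_right] at this
    rcases mul_eq_zero.mp this with h | h
    · exact hα0 l (by rw [hc, h, zero_smul])
    · exact (inner_self_ne_zero.mpr (hα0 j0)) h
  -- cross orthogonality: R vs C ∪ C'
  have hRcross : ∀ j ∈ R, ∀ l ∈ C ∪ C', (inner ℂ (β j) (β l) : ℂ) = 0 ∧ (inner ℂ (β l) (β j) : ℂ) = 0 := by
    intro j hjR l hl
    have hjnC : j ∉ C := fun h => by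
      rw [hR, Finset.mem_sdiff] at hjR; exact hjR.2 (Finset.mem_union_left _ h)
    have hjnC' : j ∉ C' := fun h => by
      rw [hR, Finset.mem_sdiff] at hjR; exact hjR.2 (Finset.mem_union_right _ h)
    have hαa : (inner ℂ (α j) (α l) : ℂ) ≠ 0 := by
      rcases Finset.mem_union.mp hl with hlC | hlC'
      · obtain ⟨c, hc⟩ := (hmemC l).mp hlC
        intro h0
        rw [hc, inner_smul_right] at h0
        rcases mul_eq_zero.mp h0 with h | h
        · exact hα0 l (by rw [hc, h, zero_smul])
        · exact hjnC' ((hmemC' j).mpr (inner_eq_zero_symm.mp h))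
      · intro h0
        have h1 : (inner ℂ (α l) (α j0) : ℂ) = 0 :=
          inner_eq_zero_symm.mp ((hmemC' l).mp hlC')
        have h2 : (inner ℂ (α l) (α j) : ℂ) = 0 := inner_eq_zero_symm.mp h0
        obtain ⟨c, hc⟩ := two_dim_dep (hα0 l) (hα0 j0) h1 h2
        exact hjnC ((hmemC j).mpr ⟨c, hc⟩)
    have hjl : j ≠ l := by
      intro h; subst h
      exact (Finset.mem_sdiff.mp hjR).2 hl
    have h1 : (inner ℂ (β j) (β l) : ℂ) = 0 := by
      rcases horth j l hjl with h | h
      · exact absurd h hαa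
      · exact h
    exact ⟨h1, inner_eq_zero_symm.mp h1⟩
  -- U and dimension facts
  set U : Submodule ℂ (EuclideanSpace ℂ (Fin nB)) := span ℂ (β '' ↑(C ∪ C')) with hU
  have hUV : U ≤ V := by
    rw [hU, Submodule.span_le]
    rintro - ⟨l, -, rfl⟩
    exact hβV l
  -- β on C is orthonormal
  have hβCorth : ∀ l ∈ C, ∀ l' ∈ C, l ≠ l' → (inner ℂ (β l) (β l') : ℂ) = 0 := by
    intro l hl l' hl' hne
    obtain ⟨c, hc⟩ := (hmemC l).mp hl
    obtain ⟨c', hc'⟩ := (hmemC l').mp hl'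
    rcases horth l l' hne with h | h
    · exact absurd h (hparinner j0 l l' c c' hc hc')
    · exact h
  have hcU : C.card ≤ finrank ℂ U := by
    have hon : Orthonormal ℂ (fun l : ↑C => (⟨β l, Submodule.subset_span
        (Set.mem_image_of_mem β (by simp [l.2]))⟩ : ↥U)) := by
      constructor
      · intro l
        simpa [Submodule.norm_coe] using hβ l
      · intro l l' hne
        have : (l : Fin k) ≠ (l' : Fin k) := fun h => hne (Subtype.ext h)
        simpa [Submodule.coe_inner] using hβCorth l l.2 l' l'.2 this
    have := hon.linearIndependent.fintype_card_le_finrank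
    simpa [Fintype.card_coe] using this
  -- C' is contained in a parallel class, so its size is at most C.card
  have hc'c : C'.card ≤ C.card := by
    rcases Finset.eq_empty_or_nonempty C' with h | ⟨l1, hl1⟩
    · simp [h]
    · have hsub : C' ⊆ P l1 := by
        intro l hl
        rw [hP, Finset.mem_filter]
        refine ⟨mem_univ _, ?_⟩
        exact two_dim_dep (hα0 j0) (hα0 l1) ((hmemC' l1).mp hl1) ((hmemC' l).mp hl)
      exact le_trans (Finset.card_le_card hsub) (hmax l1 (mem_univ _))
  rcases lt_or_ge C'.card (finrank ℂ U) with hlt | hge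
  · -- Case 1: pick x ⟂ α j0, y ⟂ β on C' ∪ R
    set Z : Submodule ℂ (EuclideanSpace ℂ (Fin nB)) := span ℂ (β '' ↑(C' ∪ R)) with hZ
    have hZbound : finrank ℂ Z < finrank ℂ V := by
      have hsplit : Z ≤ span ℂ (β '' ↑C') ⊔ span ℂ (β '' ↑R) := by
        rw [hZ, Finset.coe_union, Set.image_union, Submodule.span_union]
      have h1 : finrank ℂ (span ℂ (β '' ↑C')) ≤ C'.card := by
        have : β '' ↑C' = ↑(C'.image β) := (Finset.coe_image).symm
        rw [this]
        exact (finrank_span_finset_le_card _).trans (Finset.card_image_le)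
      have h2 : span ℂ (β '' ↑R) ≤ V ⊓ Uᗮ := by
        rw [Submodule.span_le]
        rintro - ⟨j, hj, rfl⟩
        refine ⟨hβV j, ?_⟩
        rw [hU]
        apply mem_orth_span
        rintro - ⟨l, hl, rfl⟩
        exact (hRcross j hj l hl).2
      have h3 : finrank ℂ (span ℂ (β '' ↑R)) ≤ finrank ℂ ↥(V ⊓ Uᗮ) :=
        Submodule.finrank_mono h2
      have h4 := inf_orth_finrank_ge hUV
      have h5 := Submodule.finrank_mono hsplit
      have h6 := finrank_sup_le (span ℂ (β '' ↑C')) (span ℂ (β '' ↑R))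
      omega
    obtain ⟨y, hy0, hyV, hyZ⟩ := exists_ne_zero_inf_orth hZbound
    obtain ⟨x, hx0, hxj0⟩ := exists_perp (α j0)
    refine ⟨x, y, hx0, hy0, hyV, fun j => ?_⟩
    by_cases hjC : j ∈ C
    · left
      obtain ⟨c, hc⟩ := (hmemC j).mp hjC
      rw [hc, inner_smul_right, hxj0, mul_zero]
    · right
      have hjZ : β j ∈ Z := by
        apply Submodule.subset_span
        refine Set.mem_image_of_mem β ?_
        simp only [Finset.coe_union, Set.mem_union, Finset.mem_coe]
        by_cases hjC' : j ∈ C'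
        · exact Or.inl hjC'
        · refine Or.inr ?_
          rw [hR, Finset.mem_sdiff]
          exact ⟨mem_univ _, fun h => (Finset.mem_union.mp h).elim hjC hjC'⟩
      exact inner_eq_zero_symm.mp (hyZ (β j) hjZ)
  · -- Case 2: recurse on R inside V ⊓ Uᗮ
    have hceq : C'.card = finrank ℂ U ∧ C.card = finrank ℂ U := by
      constructor <;> omega
    set m := Fintype.card ↥(↑R : Finset (Fin k)) with hm
    have hmcard : m = R.card := Fintype.card_coe _
    set g : Fin m → Fin k := fun i => ((Fintype.equivFin ↥(↑R : Finset (Fin k))).symm i : Fin k)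
      with hg
    have hgR : ∀ i, g i ∈ R := fun i => ((Fintype.equivFin _).symm i).2
    have hginj : Function.Injective g := by
      intro i i' h
      exact (Fintype.equivFin _).symm.injective (Subtype.ext h)
    set V' : Submodule ℂ (EuclideanSpace ℂ (Fin nB)) := V ⊓ Uᗮ with hV'
    have hcard_un : (C ∪ C').card = C.card + C'.card := Finset.card_union_of_disjoint hdisj
    have hcck : C.card + C'.card ≤ k := by
      have := Finset.card_le_card (Finset.subset_univ (C ∪ C'))
      simpa [hcard_un, Finset.card_univ] using this
    have hmlt : m = k - (C.card + C'.card) := by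
      rw [hmcard, hR, Finset.card_sdiff_of_subset (Finset.subset_univ _), Finset.card_univ, hcard_un,
        Fintype.card_fin]
    have hCpos : 1 ≤ C.card := Finset.card_pos.mpr ⟨j0, hj0C⟩
    have hmk : m < k := by omega
    have h1 : finrank ℂ V ≤ finrank ℂ V' + finrank ℂ U := finrank_le_inf_orth_add V U
    have hk' : m < 2 * finrank ℂ V' := by omega
    have hβ'V' : ∀ i, β (g i) ∈ V' := by
      intro i
      refine ⟨hβV _, ?_⟩
      rw [hU]
      apply mem_orth_span
      rintro - ⟨l, hl, rfl⟩
      exact (hRcross (g i) (hgR i) l hl).2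
    obtain ⟨x, y, hx0, hy0, hyV', hor⟩ := IH m hmk (α ∘ g) (β ∘ g) V'
      (fun i => hα _) (fun i => hβ _) hβ'V'
      (fun i i' hne => horth _ _ (fun h => hne (hginj h))) hk'
    refine ⟨x, y, hx0, hy0, hyV'.1, fun j => ?_⟩
    by_cases hjR : j ∈ R
    · have : j = g ((Fintype.equivFin ↥(↑R : Finset (Fin k))) ⟨j, hjR⟩) := by
        simp [hg]
      rw [this]
      exact hor _
    · right
      have hjU : β j ∈ U := by
        apply Submodule.subset_span
        refine Set.mem_image_of_mem β ?_
        have : j ∈ C ∪ C' := by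
          by_contra h
          exact hjR (by rw [hR, Finset.mem_sdiff]; exact ⟨mem_univ _, h⟩)
        exact this
      exact inner_eq_zero_symm.mp (hyV'.2 (β j) hjU)



lemma card_le_bound (nB k : ℕ) (α : Fin k → EuclideanSpace ℂ (Fin 2))
    (β : Fin k → EuclideanSpace ℂ (Fin nB))
    (hα : ∀ j, ‖α j‖ = 1) (hβ : ∀ j, ‖β j‖ = 1)
    (horth : ∀ j l, j ≠ l → (inner ℂ (α j) (α l) : ℂ) = 0 ∨ (inner ℂ (β j) (β l) : ℂ) = 0) :
    k ≤ 2 * nB := by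
  set v : Fin k → EuclideanSpace ℂ (Fin 2 × Fin nB) :=
    fun j => WithLp.toLp 2 (fun p : Fin 2 × Fin nB => α j p.1 * β j p.2) with hv
  have hinner : ∀ j l, (inner ℂ (v j) (v l) : ℂ)
      = (inner ℂ (α j) (α l) : ℂ) * (inner ℂ (β j) (β l) : ℂ) := by
    intro j l
    simp only [PiLp.inner_apply, RCLike.inner_apply, hv, PiLp.toLp_apply]
    rw [Finset.sum_mul_sum, Fintype.sum_prod_type]
    apply Finset.sum_congr rfl
    intro i _
    apply Finset.sum_congr rfl
    intro m _
    simp only [map_mul]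
    ring
  have hnorm : ∀ j, (inner ℂ (v j) (v j) : ℂ) = 1 := by
    intro j
    rw [hinner, inner_self_eq_norm_sq_to_K, inner_self_eq_norm_sq_to_K, hα, hβ]
    norm_num
  have hon : Orthonormal ℂ v := by
    constructor
    · intro j
      have h1 : ((‖v j‖ : ℂ)) ^ 2 = 1 := by
        have h0 : (inner ℂ (v j) (v j) : ℂ) = ((‖v j‖ : ℂ)) ^ 2 := inner_self_eq_norm_sq_to_K _
        rw [← h0, hnorm]
      have h2 : (‖v j‖ : ℝ) ^ 2 = 1 := by
        have := h1
        push_cast at this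
        exact_mod_cast this
      nlinarith [norm_nonneg (v j)]
    · intro j l hne
      rw [hinner]
      rcases horth j l hne with h | h <;> simp [h]
  have := hon.linearIndependent.fintype_card_le_finrank
  rwa [Fintype.card_fin, finrank_euclideanSpace, Fintype.card_prod, Fintype.card_fin,
    Fintype.card_fin] at this



lemma complete_lemma (nB : ℕ) :
    ∀ d k : ℕ, k + d = 2 * nB →
    ∀ (α : Fin k → EuclideanSpace ℂ (Fin 2)) (β : Fin k → EuclideanSpace ℂ (Fin nB)),
      (∀ j, ‖α j‖ = 1) → (∀ j, ‖β j‖ = 1) →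
      (∀ j l, j ≠ l → (inner ℂ (α j) (α l) : ℂ) = 0 ∨ (inner ℂ (β j) (β l) : ℂ) = 0) →
      ∃ (a : Fin (2 * nB) → EuclideanSpace ℂ (Fin 2))
        (b : Fin (2 * nB) → EuclideanSpace ℂ (Fin nB))
        (e : Fin k ↪ Fin (2 * nB)),
        (∀ t, ‖a t‖ = 1) ∧ (∀ t, ‖b t‖ = 1) ∧
        (∀ s t, s ≠ t → (inner ℂ (a s) (a t) : ℂ) = 0 ∨ (inner ℂ (b s) (b t) : ℂ) = 0) ∧
        (∀ j, a (e j) = α j ∧ b (e j) = β j) := by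
  intro d
  induction d with
  | zero =>
    intro k hk α β hα hβ horth
    have hk' : k = 2 * nB := by omega
    subst hk'
    exact ⟨α, β, (Equiv.refl _).toEmbedding, hα, hβ, horth, fun j => ⟨rfl, rfl⟩⟩
  | succ d IH =>
    intro k hk α β hα hβ horth
    have hklt : k < 2 * nB := by omega
    have h2 : k < 2 * finrank ℂ (⊤ : Submodule ℂ (EuclideanSpace ℂ (Fin nB))) := by
      rwa [finrank_top, finrank_euclideanSpace_fin]
    obtain ⟨x, y, hx0, hy0, -, hor⟩ :=
      ext_lemma nB k α β ⊤ hα hβ (fun j => trivial) horth h2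
    set x' : EuclideanSpace ℂ (Fin 2) := ((‖x‖⁻¹ : ℝ) : ℂ) • x with hx'
    set y' : EuclideanSpace ℂ (Fin nB) := ((‖y‖⁻¹ : ℝ) : ℂ) • y with hy'
    have hxn : ‖x'‖ = 1 := by
      rw [hx', norm_smul]
      simp [norm_ne_zero_iff.mpr hx0, abs_of_nonneg (inv_nonneg.mpr (norm_nonneg x))]
    have hyn : ‖y'‖ = 1 := by
      rw [hy', norm_smul]
      simp [norm_ne_zero_iff.mpr hy0, abs_of_nonneg (inv_nonneg.mpr (norm_nonneg y))]
    set A : Fin (k + 1) → EuclideanSpace ℂ (Fin 2) := Fin.snoc α x' with hA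
    set B : Fin (k + 1) → EuclideanSpace ℂ (Fin nB) := Fin.snoc β y' with hB
    have hAu : ∀ j, ‖A j‖ = 1 := by
      intro j
      refine Fin.lastCases ?_ ?_ j
      · rw [hA, Fin.snoc_last]; exact hxn
      · intro i; rw [hA, Fin.snoc_castSucc]; exact hα i
    have hBu : ∀ j, ‖B j‖ = 1 := by
      intro j
      refine Fin.lastCases ?_ ?_ j
      · rw [hB, Fin.snoc_last]; exact hyn
      · intro i; rw [hB, Fin.snoc_castSucc]; exact hβ i
    have hor' : ∀ i : Fin k, (inner ℂ x' (α i) : ℂ) = 0 ∨ (inner ℂ y' (β i) : ℂ) = 0 := by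
      intro i
      rcases hor i with h | h
      · left; rw [hx', inner_smul_left, h, mul_zero]
      · right; rw [hy', inner_smul_left, h, mul_zero]
    have horth' : ∀ j l : Fin (k + 1), j ≠ l →
        (inner ℂ (A j) (A l) : ℂ) = 0 ∨ (inner ℂ (B j) (B l) : ℂ) = 0 := by
      intro j l hne
      rcases Fin.eq_castSucc_or_eq_last j with ⟨i, rfl⟩ | rfl <;>
        rcases Fin.eq_castSucc_or_eq_last l with ⟨i', rfl⟩ | rfl
      · rw [hA, hB, Fin.snoc_castSucc, Fin.snoc_castSucc, Fin.snoc_castSucc, Fin.snoc_castSucc]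
        exact horth i i' fun h => hne (by rw [h])
      · rw [hA, hB, Fin.snoc_castSucc, Fin.snoc_castSucc, Fin.snoc_last, Fin.snoc_last]
        rcases hor' i with h | h
        · exact Or.inl (inner_eq_zero_symm.mp h)
        · exact Or.inr (inner_eq_zero_symm.mp h)
      · rw [hA, hB, Fin.snoc_castSucc, Fin.snoc_castSucc, Fin.snoc_last, Fin.snoc_last]
        exact hor' i'
      · exact absurd rfl hne
    obtain ⟨a, b, e, ha, hb, hoab, hres⟩ := IH (k + 1) (by omega) A B hAu hBu horth'
    refine ⟨a, b, Fin.castSuccEmb.trans e, ha, hb, hoab, fun j => ?_⟩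
    have h1 := hres (Fin.castSucc j)
    have e1 : (Fin.castSuccEmb.trans e) j = e (Fin.castSucc j) := rfl
    rw [e1]
    rw [h1.1, h1.2, hA, hB, Fin.snoc_castSucc, Fin.snoc_castSucc]
    exact ⟨rfl, rfl⟩

/-- Any set of mutually orthogonal product vectors α_j ⊗ β_j in ℂ² ⊗ ℂⁿ (n ≥ 2,
unit factors) is completable to a full orthogonal product basis of ℂ² ⊗ ℂⁿ;
in particular, if the set has fewer than 2n members it is extendible by a
nonzero product vector, so there is no UPB in ℂ² ⊗ ℂⁿ. -/
theorem stmt10 (nB k : ℕ) (hB : 2 ≤ nB)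
    (α : Fin k → EuclideanSpace ℂ (Fin 2)) (β : Fin k → EuclideanSpace ℂ (Fin nB))
    (hunitα : ∀ j, ‖α j‖ = 1) (hunitβ : ∀ j, ‖β j‖ = 1)
    (horth : ∀ j l : Fin k, j ≠ l →
      (inner ℂ (α j) (α l) : ℂ) = 0 ∨ (inner ℂ (β j) (β l) : ℂ) = 0) :
    (∃ (a : Fin (2 * nB) → EuclideanSpace ℂ (Fin 2))
      (b : Fin (2 * nB) → EuclideanSpace ℂ (Fin nB))
      (e : Fin k ↪ Fin (2 * nB)),
      (∀ t, ‖a t‖ = 1) ∧ (∀ t, ‖b t‖ = 1) ∧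
      (∀ s t : Fin (2 * nB), s ≠ t →
        (inner ℂ (a s) (a t) : ℂ) = 0 ∨ (inner ℂ (b s) (b t) : ℂ) = 0) ∧
      (∀ j, a (e j) = α j ∧ b (e j) = β j)) ∧
    (k < 2 * nB →
      ∃ (x : EuclideanSpace ℂ (Fin 2)) (y : EuclideanSpace ℂ (Fin nB)),
        x ≠ 0 ∧ y ≠ 0 ∧
        ∀ j, (inner ℂ x (α j) : ℂ) = 0 ∨ (inner ℂ y (β j) : ℂ) = 0) := by
  have hcard : k ≤ 2 * nB := card_le_bound nB k α β hunitα hunitβ horth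
  constructor
  · exact complete_lemma nB (2 * nB - k) k (by omega) α β hunitα hunitβ horth
  · intro hklt
    have h2 : k < 2 * Module.finrank ℂ (⊤ : Submodule ℂ (EuclideanSpace ℂ (Fin nB))) := by
      rwa [finrank_top, finrank_euclideanSpace_fin]
    obtain ⟨x, y, hx0, hy0, -, hor⟩ :=
      ext_lemma nB k α β ⊤ hunitα hunitβ (fun j => trivial) horth h2
    exact ⟨x, y, hx0, hy0, hor⟩

end
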